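/- In the canonical model for CLC, membership of [G]ψ is characterized by truth sets: for a maximal consistent set s and G ≠ N, {s' : ψ ∈ s'} ∈ E^c(G)(s) if and only if [G]ψ ∈ s, where E^c(G)(s) = {X : ∃γ, {s' : γ ∈ s'} ⊆ X and [G]γ ∈ s}. The key step is: {s' : γ ∈ s'} ⊆ {s' : ψ ∈ s'} (over all maximal consistent sets) implies ⊢ γ → ψ, and then the derivable monotonicity rule gives [G]ψ ∈ s. -/

import Mathlib

/-- Formulas of coalition logic over agents `N`. -/
inductive CLForm (N : Type) : Type
  | atom : ℕ → CLForm N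
  | bot : CLForm N
  | imp : CLForm N → CLForm N → CLForm N
  | and : CLForm N → CLForm N → CLForm N
  | coal : Set N → CLForm N → CLForm N

namespace CLForm

variable {N : Type}

def neg (φ : CLForm N) : CLForm N := imp φ bot
def top : CLForm N := neg bot
def iff (φ ψ : CLForm N) : CLForm N := and (imp φ ψ) (imp ψ φ)

/-- Propositional evaluation treating coalition formulas as atoms. -/
def propEval (v : CLForm N → Bool) : CLForm N → Bool
  | atom n => v (atom n)
  | bot => false
  | imp φ ψ => !(propEval v φ) || propEval v ψ
  | and φ ψ => propEval v φ && propEval v ψ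
  | coal G φ => v (coal G φ)

/-- Provability in the axiom system CL. -/
inductive Prov : CLForm N → Prop
  | taut (φ : CLForm N) : (∀ v, propEval v φ = true) → Prov φ
  | g1 (G : Set N) : Prov (neg (coal G bot))
  | g2 (G : Set N) : Prov (coal G top)
  | g3 (φ : CLForm N) : Prov (imp (neg (coal ∅ (neg φ))) (coal Set.univ φ))
  | g4 (G : Set N) (φ ψ : CLForm N) : Prov (imp (coal G (and φ ψ)) (coal G ψ))
  | g5 (G₁ G₂ : Set N) (φ ψ : CLForm N) : G₁ ∩ G₂ = ∅ →
      Prov (imp (and (coal G₁ φ) (coal G₂ ψ)) (coal (G₁ ∪ G₂) (and φ ψ)))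
  | mp (φ ψ : CLForm N) : Prov (imp φ ψ) → Prov φ → Prov ψ
  | rg (G : Set N) (φ ψ : CLForm N) : Prov (iff φ ψ) →
      Prov (iff (coal G φ) (coal G ψ))

/-- Conjunction of a finite list of formulas. -/
def conjList : List (CLForm N) → CLForm N
  | [] => top
  | φ :: l => and φ (conjList l)

/-- A set of formulas is consistent if no finite subset provably implies `⊥`. -/
def SetConsistent (Γ : Set (CLForm N)) : Prop :=
  ¬ ∃ L : List (CLForm N), (∀ χ ∈ L, χ ∈ Γ) ∧ Prov (imp (conjList L) bot)

/-- Maximal consistent sets of formulas. -/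
def MCS (Γ : Set (CLForm N)) : Prop :=
  SetConsistent Γ ∧ ∀ χ : CLForm N, χ ∈ Γ ∨ neg χ ∈ Γ

end CLForm

section Aux
open CLForm
variable {N : Type}

attribute [local instance] Classical.propDecidable

lemma propEval_conjList (v : CLForm N → Bool) (L : List (CLForm N)) :
    propEval v (conjList L) = L.all (propEval v) := by
  induction L with
  | nil => simp [conjList, CLForm.top, CLForm.neg, propEval]
  | cons φ l ih => simp [conjList, propEval, ih]

lemma mcs_mem_of_prov_imp {Γ : Set (CLForm N)} (h : MCS Γ) {γ ψ : CLForm N}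
    (hγ : γ ∈ Γ) (hp : Prov (imp γ ψ)) : ψ ∈ Γ := by
  rcases h.2 ψ with h' | h'
  · exact h'
  · exfalso
    apply h.1
    refine ⟨[γ, CLForm.neg ψ], ?_, ?_⟩
    · intro χ hχ
      simp only [List.mem_cons, List.not_mem_nil, or_false] at hχ
      rcases hχ with rfl | rfl
      exacts [hγ, h']
    · apply Prov.mp _ _ _ hp
      apply Prov.taut
      intro v
      simp only [propEval, conjList, CLForm.neg, CLForm.top]
      cases hg : propEval v γ <;> cases hq : propEval v ψ <;> simp

lemma consistent_insert {Γ : Set (CLForm N)} (h : SetConsistent Γ) (χ : CLForm N) :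
    SetConsistent (insert χ Γ) ∨ SetConsistent (insert (CLForm.neg χ) Γ) := by
  by_contra hc
  push_neg at hc
  obtain ⟨h1, h2⟩ := hc
  rw [SetConsistent, not_not] at h1 h2
  obtain ⟨L, hL, pL⟩ := h1
  obtain ⟨L', hL', pL'⟩ := h2
  set M : List (CLForm N) := L.filter (fun φ => φ ≠ χ) with hM
  set M' : List (CLForm N) := L'.filter (fun φ => φ ≠ CLForm.neg χ) with hM'
  apply h
  refine ⟨M ++ M', ?_, ?_⟩
  · intro φ hφ
    rcases List.mem_append.mp hφ with hφ | hφ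
    · obtain ⟨hmem, hne⟩ := List.mem_filter.mp hφ
      rcases hL φ hmem with h' | h'
      · exact absurd h' (by simpa using hne)
      · exact h'
    · obtain ⟨hmem, hne⟩ := List.mem_filter.mp hφ
      rcases hL' φ hmem with h' | h'
      · exact absurd h' (by simpa using hne)
      · exact h'
  · apply Prov.mp _ _ (Prov.mp _ _ (Prov.taut
      (imp (imp (conjList L) bot) (imp (imp (conjList L') bot)
        (imp (conjList (M ++ M')) bot))) ?_) pL) pL'
    intro v
    have key : propEval v (conjList (M ++ M')) = true →
        propEval v (conjList L) = true ∨ propEval v (conjList L') = true := by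
      intro hMM
      rw [propEval_conjList, List.all_append, Bool.and_eq_true] at hMM
      by_cases hχ : propEval v χ = true
      · left
        rw [propEval_conjList, List.all_eq_true]
        intro φ hφ
        by_cases hfe : φ = χ
        · rw [hfe]; exact hχ
        · exact List.all_eq_true.mp hMM.1 φ (List.mem_filter.mpr ⟨hφ, by simpa using hfe⟩)
      · right
        rw [propEval_conjList, List.all_eq_true]
        intro φ hφ
        by_cases hfe : φ = CLForm.neg χ
        · rw [hfe]
          rw [Bool.not_eq_true] at hχ
          simp [CLForm.neg, propEval, hχ]
        · exact List.all_eq_true.mp hMM.2 φ (List.mem_filter.mpr ⟨hφ, by simpa using hfe⟩)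
    simp only [propEval, Bool.or_false]
    cases hA : propEval v (conjList L) <;> cases hB : propEval v (conjList L') <;>
      cases hC : propEval v (conjList (M ++ M')) <;> simp_all

lemma lindenbaum {Γ : Set (CLForm N)} (h : SetConsistent Γ) :
    ∃ Δ, Γ ⊆ Δ ∧ MCS Δ := by
  have hub : ∀ c ⊆ {Δ : Set (CLForm N) | SetConsistent Δ}, IsChain (· ⊆ ·) c →
      c.Nonempty → ∃ ub ∈ {Δ : Set (CLForm N) | SetConsistent Δ}, ∀ s ∈ c, s ⊆ ub := by
    intro c hc hchain hne
    refine ⟨⋃₀ c, ?_, fun s hs => Set.subset_sUnion_of_mem hs⟩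
    rintro ⟨L, hL, pL⟩
    have key : ∀ L : List (CLForm N), (∀ φ ∈ L, φ ∈ ⋃₀ c) → ∃ Δ ∈ c, ∀ φ ∈ L, φ ∈ Δ := by
      intro L
      induction L with
      | nil => intro _; exact ⟨hne.choose, hne.choose_spec, by simp⟩
      | cons φ l ih =>
        intro hmem
        obtain ⟨Δ, hΔc, hΔ⟩ := ih (fun φ hφ => hmem φ (List.mem_cons_of_mem _ hφ))
        obtain ⟨Δ', hΔ'c, hφΔ'⟩ := hmem φ List.mem_cons_self
        rcases hchain.total hΔc hΔ'c with hsub | hsub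
        · exact ⟨Δ', hΔ'c, fun χ hχ => by
            rcases List.mem_cons.mp hχ with rfl | hχ
            exacts [hφΔ', hsub (hΔ χ hχ)]⟩
        · exact ⟨Δ, hΔc, fun χ hχ => by
            rcases List.mem_cons.mp hχ with rfl | hχ
            exacts [hsub hφΔ', hΔ χ hχ]⟩
    obtain ⟨Δ, hΔc, hΔ⟩ := key L hL
    exact hc hΔc ⟨L, hΔ, pL⟩
  obtain ⟨m, hΓm, hmax⟩ := zorn_subset_nonempty {Δ : Set (CLForm N) | SetConsistent Δ} hub Γ h
  refine ⟨m, hΓm, hmax.1, fun χ => ?_⟩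
  rcases consistent_insert hmax.1 χ with h' | h'
  · exact Or.inl (hmax.2 h' (Set.subset_insert _ _) (Set.mem_insert _ _))
  · exact Or.inr (hmax.2 h' (Set.subset_insert _ _) (Set.mem_insert _ _))

lemma prov_imp_of_mcs {γ ψ : CLForm N}
    (h : ∀ Δ : Set (CLForm N), MCS Δ → γ ∈ Δ → ψ ∈ Δ) : Prov (imp γ ψ) := by
  by_contra hp
  have hcon : SetConsistent {γ, CLForm.neg ψ} := by
    rintro ⟨L, hL, pL⟩
    apply hp
    refine Prov.mp _ _ (Prov.taut (imp (imp (conjList L) bot) (imp γ ψ)) ?_) pL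
    intro v
    have key : propEval v γ = true → propEval v ψ = false →
        propEval v (conjList L) = true := by
      intro hg hq
      rw [propEval_conjList, List.all_eq_true]
      intro φ hφ
      rcases hL φ hφ with rfl | h'
      · exact hg
      · simp only [Set.mem_singleton_iff] at h'
        subst h'
        simp [CLForm.neg, propEval, hq]
    simp only [propEval, Bool.or_false]
    cases hg : propEval v γ <;> cases hq : propEval v ψ <;>
      cases hc : propEval v (conjList L) <;> simp_all
  obtain ⟨Δ, hsub, hΔ⟩ := lindenbaum hcon
  have hψ : ψ ∈ Δ := h Δ hΔ (hsub (by simp))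
  have hnψ : CLForm.neg ψ ∈ Δ := hsub (by simp)
  apply hΔ.1
  refine ⟨[ψ, CLForm.neg ψ], ?_, ?_⟩
  · intro χ hχ
    simp only [List.mem_cons, List.not_mem_nil, or_false] at hχ
    rcases hχ with rfl | rfl
    exacts [hψ, hnψ]
  · apply Prov.taut
    intro v
    cases hq : propEval v ψ <;>
      simp [propEval, conjList, CLForm.neg, CLForm.top, hq]

lemma prov_coal_mono (G : Set N) {γ ψ : CLForm N} (h : Prov (imp γ ψ)) :
    Prov (imp (coal G γ) (coal G ψ)) := by
  have h1 : Prov (CLForm.iff γ (CLForm.and γ ψ)) := by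
    refine Prov.mp _ _ (Prov.taut _ ?_) h
    intro v
    simp only [CLForm.iff, propEval]
    cases hg : propEval v γ <;> cases hq : propEval v ψ <;> simp
  have h2 := Prov.rg G _ _ h1
  have h3 := Prov.g4 G γ ψ
  refine Prov.mp _ _ (Prov.mp _ _ (Prov.taut
    (imp (CLForm.iff (coal G γ) (coal G (CLForm.and γ ψ)))
      (imp (imp (coal G (CLForm.and γ ψ)) (coal G ψ))
        (imp (coal G γ) (coal G ψ)))) ?_) h2) h3
  intro v
  simp only [CLForm.iff, propEval]
  cases ha : v (coal G γ) <;> cases hb : v (coal G (CLForm.and γ ψ)) <;>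
    cases hcc : v (coal G ψ) <;> simp

end Aux

open CLForm in
/-- Canonical-model characterization of `[G]ψ` membership for `G ≠ N`: in the canonical model,
whose states are the maximal consistent sets and where
`E^c(G)(s) = {X | ∃ γ, {s' : ψ ∈ s'} ⊆ X ∧ [G]γ ∈ s}`, we have
`{s' : ψ ∈ s'} ∈ E^c(G)(s)` iff `[G]ψ ∈ s`. -/
theorem canonical_effectivity_truth {N : Type} (s : Set (CLForm N)) (hs : MCS s)
    (G : Set N) (hG : G ≠ Set.univ) (ψ : CLForm N) :
    {s' : {Γ : Set (CLForm N) // MCS Γ} | ψ ∈ s'.val} ∈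
      {X : Set {Γ : Set (CLForm N) // MCS Γ} | ∃ γ : CLForm N,
        {s' : {Γ : Set (CLForm N) // MCS Γ} | γ ∈ s'.val} ⊆ X ∧ coal G γ ∈ s}
    ↔ coal G ψ ∈ s := by
  constructor
  · rintro ⟨γ, hsub, hγ⟩
    have hp : Prov (imp γ ψ) :=
      prov_imp_of_mcs (fun Δ hΔ hγΔ =>
        hsub (show (⟨Δ, hΔ⟩ : {Γ : Set (CLForm N) // MCS Γ}) ∈
          {s' : {Γ : Set (CLForm N) // MCS Γ} | γ ∈ s'.val} from hγΔ))
    exact mcs_mem_of_prov_imp hs hγ (prov_coal_mono G hp)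
  · intro h
    exact ⟨ψ, subset_rfl, h⟩
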